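/- Let (c_j)_{j≥1} be a sequence of nonnegative real numbers with ∑_{j≥1} c_j < ∞, and let k ≥ 0. Then the function y ↦ exp(k·∑'_{j≥1} c_j·|y_j|) is integrable with respect to γ, i.e. ∫_{ℝ^ℕ} exp(k·∑'_{j≥1} c_j|y_j|) dγ(y) < ∞. -/

import Mathlib

open MeasureTheory ProbabilityTheory Real

/-- `γ` is the countable product `⨂_{j ∈ ℕ} N(0,1)` of standard Gaussian measures on `ℝ^ℕ`,
characterized as the (unique) probability measure on `ℕ → ℝ` whose finite-dimensional cylinder
probabilities are products of standard Gaussian probabilities. -/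
def IsGaussianProductMeasure (γ : Measure (ℕ → ℝ)) : Prop :=
  IsProbabilityMeasure γ ∧
    ∀ (s : Finset ℕ) (B : ℕ → Set ℝ), (∀ j ∈ s, MeasurableSet (B j)) →
      γ {y | ∀ j ∈ s, y j ∈ B j} = ∏ j ∈ s, gaussianReal 0 1 (B j)

open Filter Set

lemma gauss_lintegral_exp (t : ℝ) :
    ∫⁻ x, ENNReal.ofReal (Real.exp (t * x)) ∂(gaussianReal 0 1) =
      ENNReal.ofReal (Real.exp (t ^ 2 / 2)) := by
  rw [gaussianReal_of_var_ne_zero 0 one_ne_zero,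
    lintegral_withDensity_eq_lintegral_mul _ (measurable_gaussianPDF 0 1) (by fun_prop)]
  have hpt : ∀ x : ℝ, (gaussianPDF 0 1 * fun x => ENNReal.ofReal (Real.exp (t * x))) x
      = ENNReal.ofReal (Real.exp (t ^ 2 / 2)) * ENNReal.ofReal (gaussianPDFReal t 1 x) := by
    intro x
    simp only [Pi.mul_apply, gaussianPDF, ← ENNReal.ofReal_mul (gaussianPDFReal_nonneg 0 1 x)]
    rw [← ENNReal.ofReal_mul (Real.exp_pos _).le]
    congr 1
    simp only [gaussianPDFReal, NNReal.coe_one, mul_one, sub_zero]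
    rw [mul_assoc, ← Real.exp_add, ← mul_assoc, mul_comm (Real.exp _), mul_assoc, ← Real.exp_add]
    congr 2
    ring
  simp_rw [hpt]
  rw [lintegral_const_mul _ (by exact (measurable_gaussianPDF t 1))]
  rw [lintegral_gaussianPDFReal_eq_one t one_ne_zero, mul_one]

lemma integral_Ioi_mul_exp : ∫ x in Set.Ioi (0:ℝ), x * Real.exp (-(1/2) * x ^ 2) = 1 := by
  have A : ∀ x : ℝ, HasDerivAt (fun y : ℝ => -Real.exp (-(1/2) * y ^ 2))
      (x * Real.exp (-(1/2) * x ^ 2)) x := by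
    intro x
    have h := (((hasDerivAt_pow 2 x).const_mul (-(1/2) : ℝ)).exp).neg
    refine h.congr_deriv ?_
    simp
    ring
  have B : Tendsto (fun y : ℝ => -Real.exp (-(1/2) * y ^ 2)) atTop (nhds 0) := by
    have : Tendsto (fun y : ℝ => (-(1/2) : ℝ) * y ^ 2) atTop atBot :=
      (tendsto_pow_atTop two_ne_zero).const_mul_atTop_of_neg (by norm_num)
    simpa using (Real.tendsto_exp_atBot.comp this).neg
  have := integral_Ioi_of_hasDerivAt_of_tendsto' (a := 0) (fun x _ => A x)
    ((integrable_mul_exp_neg_mul_sq (by norm_num : (0:ℝ) < 1/2)).integrableOn) B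
  simpa using this

lemma gauss_lintegral_abs :
    ∫⁻ x, ENNReal.ofReal |x| ∂(gaussianReal 0 1) ≤ 1 := by
  have hpdf : ∀ x : ℝ, gaussianPDFReal 0 1 x = (√(2 * π))⁻¹ * Real.exp (-(1/2) * x ^ 2) := by
    intro x
    simp only [gaussianPDFReal, NNReal.coe_one, mul_one, sub_zero]
    ring_nf
  have key2 : ∫ x : ℝ, |x| * Real.exp (-(1/2) * x ^ 2) = 2 := by
    calc ∫ x : ℝ, |x| * Real.exp (-(1/2) * x ^ 2)
        = ∫ x : ℝ, (fun y : ℝ => y * Real.exp (-(1/2) * y ^ 2)) |x| := by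
          congr 1; funext x; simp [sq_abs]
      _ = 2 * ∫ x in Set.Ioi (0:ℝ), x * Real.exp (-(1/2) * x ^ 2) := by exact integral_comp_abs (f := fun y : ℝ => y * Real.exp (-(1/2) * y ^ 2))
      _ = 2 := by rw [integral_Ioi_mul_exp]; ring
  have hint : Integrable (fun x : ℝ => gaussianPDFReal 0 1 x * |x|) := by
    have h1 : Integrable (fun x : ℝ => |x| * Real.exp (-(1/2) * x ^ 2)) := by
      have := (integrable_mul_exp_neg_mul_sq (by norm_num : (0:ℝ) < 1/2)).abs
      refine this.congr (Filter.Eventually.of_forall fun x => ?_)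
      simp [abs_mul, abs_of_pos (Real.exp_pos _)]
    refine (h1.const_mul ((√(2 * π))⁻¹)).congr (Filter.Eventually.of_forall fun x => ?_)
    simp only [hpdf]
    ring
  calc ∫⁻ x, ENNReal.ofReal |x| ∂(gaussianReal 0 1)
      = ∫⁻ x, ENNReal.ofReal (gaussianPDFReal 0 1 x * |x|) := by
        rw [gaussianReal_of_var_ne_zero 0 one_ne_zero,
          lintegral_withDensity_eq_lintegral_mul _ (measurable_gaussianPDF 0 1) (by fun_prop)]
        congr 1
        ext x
        simp [gaussianPDF, ← ENNReal.ofReal_mul (gaussianPDFReal_nonneg 0 1 x)]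
    _ = ENNReal.ofReal (∫ x, gaussianPDFReal 0 1 x * |x|) := by
        rw [ofReal_integral_eq_lintegral_ofReal hint (Filter.Eventually.of_forall fun x =>
          mul_nonneg (gaussianPDFReal_nonneg 0 1 x) (abs_nonneg x))]
    _ ≤ 1 := by
        rw [show (1 : ENNReal) = ENNReal.ofReal 1 by simp]
        apply ENNReal.ofReal_le_ofReal
        have hval : ∫ x, gaussianPDFReal 0 1 x * |x| = (√(2 * π))⁻¹ * 2 := by
          have heq : (fun x : ℝ => gaussianPDFReal 0 1 x * |x|)
              = fun x => (√(2 * π))⁻¹ * (|x| * Real.exp (-(1/2) * x ^ 2)) := by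
            funext x; rw [hpdf]; ring
          rw [heq, integral_const_mul, key2]
        rw [hval]
        have h2 : (2:ℝ) ≤ √(2 * π) := by
          nlinarith [Real.sq_sqrt (by positivity : (0:ℝ) ≤ 2 * π),
            Real.sqrt_nonneg (2 * π), Real.pi_gt_three]
        rw [inv_mul_le_iff₀ (by positivity : (0:ℝ) < √(2 * π))]
        simpa using h2

lemma gauss_mgf_abs_le (t : ℝ) (ht : 0 ≤ t) :
    ∫⁻ x, ENNReal.ofReal (Real.exp (t * |x|)) ∂(gaussianReal 0 1)
      ≤ ENNReal.ofReal (Real.exp (t + t ^ 2)) := by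
  set ν := gaussianReal 0 1
  have hptwise : ∀ x : ℝ, ENNReal.ofReal (Real.exp (t * |x|)) + 1
      ≤ ENNReal.ofReal (Real.exp (t * x)) + ENNReal.ofReal (Real.exp (-t * x))
        + ENNReal.ofReal t * ENNReal.ofReal |x| := by
    intro x
    rw [← ENNReal.ofReal_mul ht, ← ENNReal.ofReal_add (Real.exp_pos _).le (Real.exp_pos _).le,
      ← ENNReal.ofReal_add (by positivity) (by positivity),
      show (1 : ENNReal) = ENNReal.ofReal 1 by simp,
      ← ENNReal.ofReal_add (Real.exp_pos _).le (by norm_num)]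
    apply ENNReal.ofReal_le_ofReal
    have habs : Real.exp (t * x) + Real.exp (-t * x)
        = Real.exp (t * |x|) + Real.exp (-(t * |x|)) := by
      rcases abs_cases x with ⟨h1, _⟩ | ⟨h1, _⟩
      · rw [h1]; ring_nf
      · rw [h1]; ring_nf
    have hexp : 1 - t * |x| ≤ Real.exp (-(t * |x|)) := by
      have := Real.add_one_le_exp (-(t * |x|))
      linarith
    linarith
  have hmeas2 : Measurable fun x : ℝ => ENNReal.ofReal (Real.exp (-t * x)) := by fun_prop
  have hmeas3 : Measurable fun x : ℝ => ENNReal.ofReal t * ENNReal.ofReal |x| := by fun_prop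
  have hprob : IsProbabilityMeasure ν := by infer_instance
  have hInt : ∫⁻ x, ENNReal.ofReal (Real.exp (t * |x|)) ∂ν + 1
      ≤ ENNReal.ofReal (Real.exp (t ^ 2 / 2)) + ENNReal.ofReal (Real.exp (t ^ 2 / 2))
        + ENNReal.ofReal t := by
    calc ∫⁻ x, ENNReal.ofReal (Real.exp (t * |x|)) ∂ν + 1
        = ∫⁻ x, (ENNReal.ofReal (Real.exp (t * |x|)) + 1) ∂ν := by
          rw [lintegral_add_right _ measurable_const, lintegral_one, measure_univ]
      _ ≤ ∫⁻ x, (ENNReal.ofReal (Real.exp (t * x)) + ENNReal.ofReal (Real.exp (-t * x))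
            + ENNReal.ofReal t * ENNReal.ofReal |x|) ∂ν := lintegral_mono hptwise
      _ = ∫⁻ x, ENNReal.ofReal (Real.exp (t * x)) ∂ν
            + ∫⁻ x, ENNReal.ofReal (Real.exp (-t * x)) ∂ν
            + ∫⁻ x, ENNReal.ofReal t * ENNReal.ofReal |x| ∂ν := by
          rw [lintegral_add_right _ hmeas3, lintegral_add_right _ hmeas2]
      _ ≤ ENNReal.ofReal (Real.exp (t ^ 2 / 2)) + ENNReal.ofReal (Real.exp (t ^ 2 / 2))
            + ENNReal.ofReal t := by
          rw [gauss_lintegral_exp t, gauss_lintegral_exp (-t), neg_sq,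
            lintegral_const_mul _ (by fun_prop : Measurable fun x : ℝ => ENNReal.ofReal |x|)]
          gcongr
          calc ENNReal.ofReal t * ∫⁻ x, ENNReal.ofReal |x| ∂ν
              ≤ ENNReal.ofReal t * 1 := by gcongr; exact gauss_lintegral_abs
            _ = ENNReal.ofReal t := mul_one _
  have hreal : Real.exp (t ^ 2 / 2) + Real.exp (t ^ 2 / 2) + t ≤ Real.exp (t + t ^ 2) + 1 := by
    have h2 : Real.exp (t ^ 2 / 2) * Real.exp (t ^ 2 / 2) = Real.exp (t ^ 2) := by
      rw [← Real.exp_add]; ring_nf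
    have h3 : Real.exp (t + t ^ 2) = Real.exp t * Real.exp (t ^ 2) := by
      rw [← Real.exp_add]
    nlinarith [sq_nonneg (Real.exp (t ^ 2 / 2) - 1), Real.add_one_le_exp t,
      Real.one_le_exp (sq_nonneg t), Real.exp_pos (t ^ 2), Real.exp_pos t]
  have hfinal : ∫⁻ x, ENNReal.ofReal (Real.exp (t * |x|)) ∂ν + 1
      ≤ ENNReal.ofReal (Real.exp (t + t ^ 2)) + 1 := by
    refine hInt.trans ?_
    rw [← ENNReal.ofReal_add (Real.exp_pos _).le (Real.exp_pos _).le,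
      ← ENNReal.ofReal_add (by positivity) ht,
      show (1 : ENNReal) = ENNReal.ofReal 1 by simp,
      ← ENNReal.ofReal_add (Real.exp_pos _).le (by norm_num)]
    exact ENNReal.ofReal_le_ofReal hreal
  rwa [ENNReal.add_le_add_iff_right ENNReal.one_ne_top] at hfinal

/-- If `c j ≥ 0` with `∑ j, c j < ∞` and `k ≥ 0`, then
`∫ exp (k * ∑' j, c j * |y j|) dγ(y) < ∞` (the sum `∑'` being `0` by convention on the
`γ`-null set of `y` where the series does not converge). -/
theorem stmt_6 (γ : Measure (ℕ → ℝ)) (hγ : IsGaussianProductMeasure γ)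
    (c : ℕ → ℝ) (hc : ∀ j, 0 ≤ c j) (hsum : Summable c) (k : ℝ) (hk : 0 ≤ k) :
    ∫⁻ y, ENNReal.ofReal (Real.exp (k * ∑' j : ℕ, c j * |y j|)) ∂γ < ⊤ := by
  obtain ⟨hprob, hcyl⟩ := hγ
  have hmeas_eval : ∀ j : ℕ, Measurable (fun y : ℕ → ℝ => y j) :=
    fun j => measurable_pi_apply j
  -- marginals
  have hmap : ∀ j : ℕ, γ.map (fun y : ℕ → ℝ => y j) = gaussianReal 0 1 := by
    intro j
    ext s hs
    rw [Measure.map_apply (hmeas_eval j) hs]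
    have h := hcyl {j} (fun _ => s) (fun _ _ => hs)
    simpa [Set.preimage] using h
  -- independence of coordinates
  have hindep : iIndepFun
      (fun (j : ℕ) (y : ℕ → ℝ) => y j) γ := by
    rw [iIndepFun_iff_measure_inter_preimage_eq_mul]
    intro S sets hsets
    have h1 := hcyl S sets hsets
    have h2 : {y : ℕ → ℝ | ∀ j ∈ S, y j ∈ sets j}
        = ⋂ j ∈ S, (fun y : ℕ → ℝ => y j) ⁻¹' sets j := by
      ext y; simp
    rw [h2] at h1
    rw [h1]
    refine Finset.prod_congr rfl fun j hj => ?_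
    rw [← Measure.map_apply (hmeas_eval j) (hsets j hj), hmap j]
  -- the factor functions
  set g : ℕ → (ℕ → ℝ) → ENNReal :=
    fun j y => ENNReal.ofReal (Real.exp (k * c j * |y j|)) with hg_def
  have hgmeas : ∀ j, Measurable (g j) := by
    intro j
    apply Measurable.ennreal_ofReal
    exact (Real.measurable_exp).comp ((measurable_const.mul ((hmeas_eval j).abs)))
  have hgindep : iIndepFun g γ := by
    have := hindep.comp (fun j (x : ℝ) => ENNReal.ofReal (Real.exp (k * c j * |x|)))
      (fun j => by fun_prop)
    exact this
  -- product formula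
  have hprod : ∀ n : ℕ, ∫⁻ y, ∏ j ∈ Finset.range n, g j y ∂γ
      = ∏ j ∈ Finset.range n, ∫⁻ y, g j y ∂γ := by
    intro n
    induction n with
    | zero => simp
    | succ n ih =>
      have hF : Measurable (∏ j ∈ Finset.range n, g j) := by
        rw [Finset.prod_fn]
        exact Finset.measurable_prod _ fun j _ => hgmeas j
      have hkey := lintegral_mul_eq_lintegral_mul_lintegral_of_indepFun hF (hgmeas n)
        (hgindep.indepFun_prod_range_succ hgmeas n)
      have e1 : ∀ y, ∏ j ∈ Finset.range (n + 1), g j y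
          = ((∏ j ∈ Finset.range n, g j) * g n) y := by
        intro y
        simp [Finset.prod_range_succ, Finset.prod_apply]
      have e2 : ∀ y, (∏ j ∈ Finset.range n, g j) y = ∏ j ∈ Finset.range n, g j y := by
        intro y; simp [Finset.prod_apply]
      calc ∫⁻ y, ∏ j ∈ Finset.range (n + 1), g j y ∂γ
          = ∫⁻ y, ((∏ j ∈ Finset.range n, g j) * g n) y ∂γ := by
            congr 1; funext y; exact e1 y
        _ = (∫⁻ y, (∏ j ∈ Finset.range n, g j) y ∂γ) * ∫⁻ y, g n y ∂γ := hkey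
        _ = (∫⁻ y, ∏ j ∈ Finset.range n, g j y ∂γ) * ∫⁻ y, g n y ∂γ := by
            congr 1; apply lintegral_congr; intro y; exact e2 y
        _ = ∏ j ∈ Finset.range (n + 1), ∫⁻ y, g j y ∂γ := by
            rw [ih, Finset.prod_range_succ]
  -- single-factor bound
  have hsingle : ∀ j : ℕ, ∫⁻ y, g j y ∂γ
      ≤ ENNReal.ofReal (Real.exp (k * c j + (k * c j) ^ 2)) := by
    intro j
    have htrans : ∫⁻ y, g j y ∂γ
        = ∫⁻ x, ENNReal.ofReal (Real.exp (k * c j * |x|)) ∂(gaussianReal 0 1) := by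
      rw [← hmap j, lintegral_map (by fun_prop) (hmeas_eval j)]
    rw [htrans]
    exact gauss_mgf_abs_le _ (mul_nonneg hk (hc j))
  -- uniform bound
  set C := ∑' j, c j with hC_def
  have hC0 : 0 ≤ C := tsum_nonneg hc
  set B := (k + k ^ 2 * C) * C with hB_def
  have hbound : ∀ n : ℕ, ∫⁻ y, ∏ j ∈ Finset.range n, g j y ∂γ
      ≤ ENNReal.ofReal (Real.exp B) := by
    intro n
    rw [hprod n]
    calc ∏ j ∈ Finset.range n, ∫⁻ y, g j y ∂γ
        ≤ ∏ j ∈ Finset.range n, ENNReal.ofReal (Real.exp (k * c j + (k * c j) ^ 2)) :=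
          Finset.prod_le_prod' fun j _ => hsingle j
      _ = ENNReal.ofReal (∏ j ∈ Finset.range n, Real.exp (k * c j + (k * c j) ^ 2)) :=
          (ENNReal.ofReal_prod_of_nonneg fun j _ => (Real.exp_pos _).le).symm
      _ = ENNReal.ofReal (Real.exp (∑ j ∈ Finset.range n, (k * c j + (k * c j) ^ 2))) := by
          rw [Real.exp_sum]
      _ ≤ ENNReal.ofReal (Real.exp B) := by
          apply ENNReal.ofReal_le_ofReal
          apply Real.exp_le_exp.mpr
          have hcC : ∀ j, c j ≤ C := fun j => Summable.le_tsum hsum j fun i _ => hc i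
          calc ∑ j ∈ Finset.range n, (k * c j + (k * c j) ^ 2)
              ≤ ∑ j ∈ Finset.range n, (k + k ^ 2 * C) * c j := by
                apply Finset.sum_le_sum
                intro j _
                have h1 := hc j
                have h2 := mul_le_mul_of_nonneg_left (hcC j)
                  (mul_nonneg (mul_nonneg hk hk) (hc j))
                nlinarith [hk, hC0]
            _ = (k + k ^ 2 * C) * ∑ j ∈ Finset.range n, c j := by
                rw [Finset.mul_sum]
            _ ≤ (k + k ^ 2 * C) * C := by
                apply mul_le_mul_of_nonneg_left
                · exact Summable.sum_le_tsum _ (fun i _ => hc i) hsum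
                · nlinarith [hk, hC0]
            _ = B := rfl
  -- pointwise liminf comparison
  have hpt : ∀ y : ℕ → ℝ, ENNReal.ofReal (Real.exp (k * ∑' j : ℕ, c j * |y j|))
      ≤ Filter.liminf (fun n => ∏ j ∈ Finset.range n, g j y) Filter.atTop := by
    intro y
    have hprodeq : ∀ n : ℕ, ∏ j ∈ Finset.range n, g j y
        = ENNReal.ofReal (Real.exp (k * ∑ j ∈ Finset.range n, c j * |y j|)) := by
      intro n
      rw [Finset.mul_sum, Real.exp_sum, ENNReal.ofReal_prod_of_nonneg
        (fun j _ => (Real.exp_pos _).le)]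
      refine Finset.prod_congr rfl fun j _ => ?_
      rw [hg_def]
      ring_nf
    by_cases hy : Summable fun j => c j * |y j|
    · have h1 : Tendsto (fun n => ∑ j ∈ Finset.range n, c j * |y j|) atTop
          (nhds (∑' j, c j * |y j|)) := hy.hasSum.tendsto_sum_nat
      have h2 : Tendsto (fun n => ENNReal.ofReal
          (Real.exp (k * ∑ j ∈ Finset.range n, c j * |y j|))) atTop
          (nhds (ENNReal.ofReal (Real.exp (k * ∑' j, c j * |y j|)))) := by
        exact (ENNReal.continuous_ofReal.tendsto _).comp
          ((Real.continuous_exp.tendsto _).comp (h1.const_mul k))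
      simp_rw [hprodeq]
      rw [h2.liminf_eq]
    · rw [tsum_eq_zero_of_not_summable hy]
      simp only [mul_zero, Real.exp_zero, ENNReal.ofReal_one]
      apply Filter.le_liminf_of_le
      · isBoundedDefault
      · apply Filter.Eventually.of_forall
        intro n
        rw [hprodeq n]
        rw [show (1 : ENNReal) = ENNReal.ofReal (Real.exp 0) by simp]
        apply ENNReal.ofReal_le_ofReal
        apply Real.exp_le_exp.mpr
        have : 0 ≤ ∑ j ∈ Finset.range n, c j * |y j| :=
          Finset.sum_nonneg fun j _ => mul_nonneg (hc j) (abs_nonneg _)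
        nlinarith [hk]
  -- assemble
  calc ∫⁻ y, ENNReal.ofReal (Real.exp (k * ∑' j : ℕ, c j * |y j|)) ∂γ
      ≤ ∫⁻ y, Filter.liminf (fun n => ∏ j ∈ Finset.range n, g j y) Filter.atTop ∂γ :=
        lintegral_mono hpt
    _ ≤ Filter.liminf (fun n => ∫⁻ y, ∏ j ∈ Finset.range n, g j y ∂γ) Filter.atTop :=
        lintegral_liminf_le fun n => Finset.measurable_prod _ fun j _ => hgmeas j
    _ ≤ ENNReal.ofReal (Real.exp B) := by
        exact Filter.liminf_le_of_frequently_le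
          (Filter.Frequently.of_forall fun n => hbound n) (by isBoundedDefault)
    _ < ⊤ := ENNReal.ofReal_lt_top
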